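/- Let Sⁿ_{s₀} = ∑_{z̃ ∈ Ωⁿ_{s₀}} Pⁿ_{s₀}(z̃). Then S⁰_{s₀} = 1 and for n ≥ 1 the recursion Sⁿ_{s₀} = ∑_{s₁ ∈ S} δ(s₀)(ε, s₁)·Sⁿ_{s₁} + ∑_{a₁ ∈ Σ, s₁ ∈ S} δ(s₀)(a₁, s₁)·Sⁿ⁻¹_{s₁} holds. -/

import Mathlib

open scoped ENNReal

/-- A Hidden Markov Model with ε-transitions: a finite state space `S`, a finite
alphabet `A`, and for each state a probability function on `(Σ ∪ {ε}) × S`,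
where `ε` is modelled by `none`. -/
structure HMMeps (S A : Type*) [Fintype S] [Fintype A] where
  δ : S → Option A × S → ℝ≥0∞
  sum_one : ∀ s : S, ∑ p : Option A × S, δ s p = 1

namespace HMMeps

variable {S A : Type*} [Fintype S] [Fintype A]

/-- The probability of an alternating sequence `s₀ a₁ s₁ … a_m s_m`, represented by
its start state `s₀` together with the list of steps `[(a₁,s₁),…,(a_m,s_m)]`:
the product of the transition probabilities. -/
noncomputable def pathProb (M : HMMeps S A) : S → List (Option A × S) → ℝ≥0∞
  | _, [] => 1
  | s, p :: rest => M.δ s p * M.pathProb p.2 rest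

/-- The observable projection `Y`: the sequence of observable symbols
(ε's and states removed). -/
def obsSeq (z : List (Option A × S)) : List A := z.filterMap Prod.fst

/-- The last state `L` of a sequence starting in `s₀`. -/
def lastState (s₀ : S) (z : List (Option A × S)) : S :=
  (z.getLast?.map Prod.snd).getD s₀

/-- The sample space `Ωⁿ_{s₀} = s₀((εS)*ΣS)ⁿ`: alternating sequences containing
exactly `n` observable symbols whose second-to-last element (i.e. the symbol of the
last transition) is observable.  (The start state is kept separately, so an element
of the sample space is just the list of steps.) -/
def Omega (S A : Type*) (n : ℕ) : Set (List (Option A × S)) :=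
  {z | (obsSeq z).length = n ∧ ∀ p ∈ z.getLast?, (Prod.fst p).isSome = true}

end HMMeps

namespace HMMausAux

open HMMeps

variable {S A : Type*}

/-- `Ω⁰` contains only the empty sequence. -/
lemma omega_zero_eq : Omega S A 0 = {([] : List (Option A × S))} := by
  ext z
  constructor
  · rintro ⟨hlen, hlast⟩
    cases z with
    | nil => rfl
    | cons p rest =>
      exfalso
      obtain ⟨q, hq⟩ := Option.isSome_iff_exists.1
        (List.getLast?_isSome.2 (List.cons_ne_nil p rest))
      have hqmem : q ∈ p :: rest := List.mem_of_getLast? hq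
      have hqsome := hlast q (hq ▸ rfl)
      obtain ⟨a, ha⟩ := Option.isSome_iff_exists.1 hqsome
      have hmem : a ∈ obsSeq (p :: rest) := by
        simp only [obsSeq, List.mem_filterMap]
        exact ⟨q, hqmem, ha⟩
      rw [List.length_eq_zero_iff.1 hlen] at hmem
      exact List.not_mem_nil hmem
  · rintro rfl
    exact ⟨rfl, by simp⟩

lemma cons_none_mem {n : ℕ} (hn : 1 ≤ n) (s : S) (rest : List (Option A × S)) :
    ((none, s) :: rest) ∈ Omega S A n ↔ rest ∈ Omega S A n := by
  cases rest with
  | nil =>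
    simp only [Omega, obsSeq, Set.mem_setOf_eq]
    constructor
    · rintro ⟨h, -⟩; simp at h; omega
    · rintro ⟨h, -⟩; simp at h; omega
  | cons q qs =>
    simp only [Omega, obsSeq, Set.mem_setOf_eq, List.filterMap_cons,
      List.getLast?_cons_cons]

lemma cons_some_mem {n : ℕ} (hn : 1 ≤ n) (a : A) (s : S) (rest : List (Option A × S)) :
    ((some a, s) :: rest) ∈ Omega S A n ↔ rest ∈ Omega S A (n - 1) := by
  cases rest with
  | nil =>
    simp only [Omega, obsSeq, Set.mem_setOf_eq, List.filterMap_cons]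
    constructor
    · rintro ⟨h, -⟩
      simp at h
      refine ⟨by simp; omega, by simp⟩
    · rintro ⟨h, -⟩
      simp at h
      refine ⟨by simp; omega, by simp⟩
  | cons q qs =>
    simp only [Omega, obsSeq, Set.mem_setOf_eq, List.filterMap_cons,
      List.getLast?_cons_cons, List.length_cons]
    constructor
    · rintro ⟨h, h2⟩; exact ⟨by omega, h2⟩
    · rintro ⟨h, h2⟩; exact ⟨by omega, h2⟩

variable [Fintype S] [Fintype A]

lemma tsum_omega (M : HMMeps S A) (n : ℕ) (s : S) :
    (∑' z : Omega S A n, M.pathProb s z.1)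
      = ∑' z : List (Option A × S), (Omega S A n).indicator (M.pathProb s) z :=
  tsum_subtype _ _

end HMMausAux

open HMMeps HMMausAux in
/-- With `Sⁿ_{s₀} = ∑_{z̃ ∈ Ωⁿ_{s₀}} Pⁿ_{s₀}(z̃)` one has `S⁰_{s₀} = 1`
and, for `n ≥ 1`, the recursion
`Sⁿ_{s₀} = ∑_{s₁} δ(s₀)(ε,s₁)·Sⁿ_{s₁} + ∑_{a₁∈Σ, s₁} δ(s₀)(a₁,s₁)·Sⁿ⁻¹_{s₁}`. -/
theorem omega_sum_recursion {S A : Type*} [Fintype S] [Fintype A]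
    (M : HMMeps S A) (s₀ : S) (n : ℕ) (hn : 1 ≤ n) :
    (∑' z : Omega S A 0, M.pathProb s₀ z.1) = 1 ∧
    (∑' z : Omega S A n, M.pathProb s₀ z.1)
      = (∑ s₁ : S, M.δ s₀ (none, s₁) * ∑' z : Omega S A n, M.pathProb s₁ z.1)
        + ∑ a₁ : A, ∑ s₁ : S,
            M.δ s₀ (some a₁, s₁) * ∑' z : Omega S A (n - 1), M.pathProb s₁ z.1 := by
  classical
  constructor
  · rw [omega_zero_eq, tsum_singleton]
    rfl
  · set f : List (Option A × S) → ℝ≥0∞ := (Omega S A n).indicator (M.pathProb s₀) with hf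
    set g : (Option A × S) × List (Option A × S) → ℝ≥0∞ := fun q => f (q.1 :: q.2) with hg
    rw [tsum_omega]
    have key : (∑' z : List (Option A × S), f z) = ∑' q, g q := by
      refine tsum_eq_tsum_of_ne_zero_bij (fun q => q.1.1 :: q.1.2) ?_ ?_ ?_
      · rintro ⟨⟨p, l⟩, hp⟩ ⟨⟨p', l'⟩, hp'⟩ h
        simp only [List.cons.injEq] at h
        simp only [Subtype.mk.injEq, Prod.mk.injEq]
        exact ⟨h.1, h.2⟩
      · intro z hz
        have hmem : z ∈ Omega S A n := by
          by_contra hcon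
          exact hz (Set.indicator_of_notMem hcon _)
        cases z with
        | nil =>
          exfalso
          have := hmem.1
          simp [obsSeq] at this
          omega
        | cons p rest =>
          refine ⟨⟨(p, rest), ?_⟩, rfl⟩
          simpa [hg] using hz
      · exact fun q => rfl
    rw [key]
    have hcons : ∀ q : (Option A × S) × List (Option A × S),
        g q = M.δ s₀ q.1 *
            (Omega S A (match q.1.1 with | none => n | some _ => n - 1)).indicator
              (M.pathProb q.1.2) q.2 := by
      rintro ⟨⟨a | a, s⟩, rest⟩
      · show f ((none, s) :: rest) = _
        rw [hf, Set.indicator_apply, Set.indicator_apply]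
        by_cases h : rest ∈ Omega S A n
        · rw [if_pos ((cons_none_mem hn s rest).2 h), if_pos h]
          rfl
        · rw [if_neg (fun hc => h ((cons_none_mem hn s rest).1 hc)), if_neg h, mul_zero]
      · show f ((some a, s) :: rest) = _
        rw [hf, Set.indicator_apply, Set.indicator_apply]
        by_cases h : rest ∈ Omega S A (n - 1)
        · rw [if_pos ((cons_some_mem hn a s rest).2 h), if_pos h]
          rfl
        · rw [if_neg (fun hc => h ((cons_some_mem hn a s rest).1 hc)), if_neg h, mul_zero]
    have step : (∑' q : (Option A × S) × List (Option A × S), g q)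
        = ∑' p : Option A × S, ∑' rest : List (Option A × S),
            M.δ s₀ p * (Omega S A (match p.1 with | none => n | some _ => n - 1)).indicator
              (M.pathProb p.2) rest := by
      rw [← ENNReal.tsum_prod]
      exact tsum_congr hcons
    rw [step, tsum_fintype]
    have hterm : ∀ p : Option A × S,
        (∑' rest : List (Option A × S), M.δ s₀ p *
          (Omega S A (match p.1 with | none => n | some _ => n - 1)).indicator
            (M.pathProb p.2) rest)
        = M.δ s₀ p * ∑' z : Omega S A (match p.1 with | none => n | some _ => n - 1),
            M.pathProb p.2 z.1 := by
      intro p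
      rw [ENNReal.tsum_mul_left, tsum_omega]
    rw [Finset.sum_congr rfl (fun p _ => hterm p), Fintype.sum_prod_type]
    rw [Fintype.sum_option]
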